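/- For all x ∈ (0, 2π), f'(x) ≥ f'(π) = -7/8, where f(x) = sin(x)·(1 - 1/(8·sin³(x/2))). -/

import Mathlib

open Real Set

noncomputable def f (x : ℝ) : ℝ := Real.sin x * (1 - 1 / (8 * Real.sin (x/2)^3))

lemma key : ∀ x ∈ Ioo (0:ℝ) (2*π), deriv f x =
    1 - 2*(Real.sin (x/2))^2 + (2 - (Real.sin (x/2))^2)/(8*(Real.sin (x/2))^3) := by
  intro x hx
  obtain ⟨hx0, hx2⟩ := hx
  have hs : 0 < Real.sin (x/2) := Real.sin_pos_of_pos_of_lt_pi (by linarith) (by linarith)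
  have hsne : Real.sin (x/2) ≠ 0 := ne_of_gt hs
  have hne : (8 * Real.sin (x/2)^3) ≠ 0 := by positivity
  have h1 : HasDerivAt (fun x : ℝ => Real.sin (x/2)) (Real.cos (x/2) * (1/2)) x := by
    have := (Real.hasDerivAt_sin (x/2)).comp x ((hasDerivAt_id x).div_const 2)
    simpa [Function.comp_def] using this
  have h2 : HasDerivAt (fun x : ℝ => 8 * Real.sin (x/2)^3)
      (8 * (3 * Real.sin (x/2)^2 * (Real.cos (x/2) * (1/2)))) x := by
    have := (h1.pow 3).const_mul (8:ℝ)
    simpa [mul_comm, mul_assoc, mul_left_comm] using this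
  have h3 : HasDerivAt (fun x : ℝ => 1 - 1/(8 * Real.sin (x/2)^3))
      (-(-(8 * (3 * Real.sin (x/2)^2 * (Real.cos (x/2) * (1/2)))) / (8 * Real.sin (x/2)^3)^2)) x := by
    have := (h2.inv hne).const_sub 1
    simpa [one_div] using this
  have h4 : HasDerivAt f
      (Real.cos x * (1 - 1/(8 * Real.sin (x/2)^3)) +
        Real.sin x * (-(-(8 * (3 * Real.sin (x/2)^2 * (Real.cos (x/2) * (1/2)))) / (8 * Real.sin (x/2)^3)^2))) x := by
    exact (Real.hasDerivAt_sin x).mul h3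
  rw [h4.deriv]
  have hsin : Real.sin x = 2 * Real.sin (x/2) * Real.cos (x/2) := by
    rw [← Real.sin_two_mul]; ring_nf
  have hcos : Real.cos x = 1 - 2 * Real.sin (x/2)^2 := by
    have := Real.cos_two_mul (x/2)
    have hpy := Real.sin_sq_add_cos_sq (x/2)
    have : Real.cos (2 * (x/2)) = 2 * Real.cos (x/2)^2 - 1 := this
    rw [show (2:ℝ) * (x/2) = x by ring] at this
    nlinarith [this, hpy]
  rw [hsin, hcos]
  have hpy := Real.sin_sq_add_cos_sq (x/2)
  field_simp
  linear_combination 3 * hpy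

theorem stmt3 : deriv f π = -7/8 ∧ ∀ x ∈ Ioo (0:ℝ) (2*π), deriv f x ≥ -7/8 := by
  have hπ : π ∈ Ioo (0:ℝ) (2*π) := ⟨Real.pi_pos, by linarith [Real.pi_pos]⟩
  constructor
  · rw [key π hπ]
    simp [Real.sin_pi_div_two]
    norm_num
  · intro x hx
    rw [key x hx]
    obtain ⟨hx0, hx2⟩ := hx
    have hs : 0 < Real.sin (x/2) := Real.sin_pos_of_pos_of_lt_pi (by linarith) (by linarith)
    have hs1 : Real.sin (x/2) ≤ 1 := Real.sin_le_one _
    set s := Real.sin (x/2)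
    have key2 : 1 - 2*s^2 + (2-s^2)/(8*s^3) + 7/8
        = ((1-s)*(16*s^4+16*s^3+s^2+2*s+2))/(8*s^3) := by
      field_simp; ring
    have hnum : (0:ℝ) ≤ (1-s)*(16*s^4+16*s^3+s^2+2*s+2) := mul_nonneg (by linarith) (by positivity)
    have hfrac := div_nonneg hnum (by positivity : (0:ℝ) ≤ 8*s^3)
    linarith [key2, hfrac]
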